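/- Let γ ∈ (0,1], A ≥ 1 and a > 0. Then there exist constants c ∈ (0,1) and C > 0 and a function σ : (0,1] → (0,∞) with σ(t) → 0 as t → 0+, all depending only on A, a and γ, with the following property. Let (w_n)_{n≥0} and (e_n)_{n≥0} be sequences of nonnegative real numbers with e_0 ≤ 1 such that w_{n+1} ≤ A e_n^{1+γ} for all n ≥ 0, and such that for each n ≥ 0 either (w_{n+1} ≤ w_n − a e_n² and e_{n+1} = A e_n) or (w_{n+1} ≤ w_n and e_{n+1} = e_n/2). Then Σ_{n≥0} e_n ≤ σ(e_0); moreover, if γ = 1 then Σ_{n≥N} e_n ≤ C (1−c)^N for every N ≥ 0, and if γ ∈ (0,1) then Σ_{n≥N} e_n ≤ C N^{−γ/(1−γ)} for every N ≥ 1. -/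

import Mathlib

open MeasureTheory Metric Set Filter Asymptotics
open scoped ENNReal NNReal Topology

noncomputable section

namespace TOP

abbrev E (d : ℕ) := EuclideanSpace ℝ (Fin d)

/-- The last coordinate `x_d` of a point `x ∈ ℝ^d`. -/
def lastCoord (d : ℕ) (x : E d) : ℝ :=
  if h : 0 < d then x ⟨d - 1, by omega⟩ else 0

/-- The unit vector in the `x_d` direction. -/
def eD (d : ℕ) : E d :=
  if h : 0 < d then EuclideanSpace.single (⟨d - 1, by omega⟩ : Fin d) (1 : ℝ) else 0

/-- Reflection across the hyperplane `{x_d = 0}`. -/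
def reflect (d : ℕ) (x : E d) : E d := x - (2 * lastCoord d x) • eD d

/-- A function even in the `x_d` variable. -/
def EvenXd (d : ℕ) (u : E d → ℝ) : Prop := ∀ x, u (reflect d x) = u x

/-- The Laplacian, as a sum of second directional derivatives. -/
def lap (d : ℕ) (f : E d → ℝ) (x : E d) : ℝ :=
  ∑ i : Fin d,
    fderiv ℝ (fun y => fderiv ℝ f y (EuclideanSpace.single i (1 : ℝ))) x
      (EuclideanSpace.single i (1 : ℝ))

/-- Smooth test functions compactly supported in `D`. -/
def IsTest (d : ℕ) (D : Set (E d)) (φ : E d → ℝ) : Prop :=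
  ContDiff ℝ (⊤ : ℕ∞) φ ∧ HasCompactSupport φ ∧ tsupport φ ⊆ D

/-- `Δu ≤ 0` on `D` in the sense of distributions. -/
def DistLapLE (d : ℕ) (D : Set (E d)) (u : E d → ℝ) : Prop :=
  ∀ φ : E d → ℝ, IsTest d D φ → (∀ x, 0 ≤ φ x) → (∫ x, u x * lap d φ x) ≤ 0

/-- `Δu = 0` on `D` in the sense of distributions. -/
def DistHarmOn (d : ℕ) (D : Set (E d)) (u : E d → ℝ) : Prop :=
  ∀ φ : E d → ℝ, IsTest d D φ → (∫ x, u x * lap d φ x) = 0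

/-- Solution of the thin obstacle problem in `D`: even in `x_d`, `C^{1,1/2}` up to the
hyperplane from above, nonnegative on the thin space, superharmonic, and harmonic off
the contact set. -/
def IsTOPSol (d : ℕ) (D : Set (E d)) (u : E d → ℝ) : Prop :=
  ContinuousOn u D ∧ EvenXd d u ∧
  (∃ (g : E d → E d →L[ℝ] ℝ) (C : ℝ≥0),
      (∀ x ∈ D ∩ {y | 0 ≤ lastCoord d y},
        HasFDerivWithinAt u (g x) (D ∩ {y | 0 ≤ lastCoord d y}) x) ∧
      HolderOnWith C (1 / 2) g (D ∩ {y | 0 ≤ lastCoord d y})) ∧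
  (∀ x ∈ D, lastCoord d x = 0 → 0 ≤ u x) ∧
  DistLapLE d D u ∧
  DistHarmOn d (D ∩ ({y | 0 < u y} ∪ {y | lastCoord d y ≠ 0})) u

/-- The Almgren frequency of `u` at `q` is `l`. -/
def HasFreq (d : ℕ) (u : E d → ℝ) (q : E d) (l : ℝ) : Prop :=
  Tendsto
    (fun r : ℝ =>
      (r * ∫ x in ball q r, ‖gradient u x‖ ^ 2) /
        ∫ x in sphere q r, u x ^ 2 ∂μH[(d : ℝ) - 1])
    (𝓝[>] 0) (𝓝 l)

/-- Contact points (in `B_1`) with frequency `l`. -/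
def Lam (d : ℕ) (u : E d → ℝ) (l : ℝ) : Set (E d) :=
  {q | q ∈ ball 0 1 ∧ u q = 0 ∧ lastCoord d q = 0 ∧ HasFreq d u q l}

/-- The `λ`-Weiss energy of `u` at radius `r`. -/
def Weiss (d : ℕ) (u : E d → ℝ) (l r : ℝ) : ℝ :=
  (∫ x in ball (0 : E d) r, ‖gradient u x‖ ^ 2) / r ^ ((d : ℝ) - 2 + 2 * l) -
    l * (∫ x in sphere (0 : E d) r, u x ^ 2 ∂μH[(d : ℝ) - 1]) / r ^ ((d : ℝ) - 1 + 2 * l)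

/-- Positively homogeneous of (integer) degree `m`. -/
def HomOfDeg (d : ℕ) (m : ℕ) (p : E d → ℝ) : Prop :=
  ∀ r : ℝ, 0 < r → ∀ x, p (r • x) = r ^ m * p x

/-- `P_{2k}` for even `m`: `m`-homogeneous harmonic polynomials even in `x_d`. -/
def MemPEven (d : ℕ) (m : ℕ) (p : E d → ℝ) : Prop :=
  ContDiff ℝ (⊤ : ℕ∞) p ∧ (∀ x, lap d p x = 0) ∧ HomOfDeg d m p ∧ EvenXd d p

/-- `P_{2k+1}` for odd `m`: `m`-homogeneous, even in `x_d`, vanishing on `{x_d = 0}`,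
harmonic in `{x_d ≠ 0}`. -/
def MemPOdd (d : ℕ) (m : ℕ) (p : E d → ℝ) : Prop :=
  Continuous p ∧ EvenXd d p ∧ (∀ x, lastCoord d x = 0 → p x = 0) ∧
  HomOfDeg d m p ∧ DistHarmOn d {y | lastCoord d y ≠ 0} p

/-- `P_m`, split by parity. -/
def MemP (d : ℕ) (m : ℕ) (p : E d → ℝ) : Prop :=
  if m % 2 = 0 then MemPEven d m p else MemPOdd d m p

/-- `P⁺_{2k}`: additionally `p ≥ 0` on the thin space. -/
def MemPPlusEven (d : ℕ) (m : ℕ) (p : E d → ℝ) : Prop :=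
  MemPEven d m p ∧ ∀ x, lastCoord d x = 0 → 0 ≤ p x

/-- `P⁺_{2k+1}`: additionally `Δp ≤ 0` distributionally on `ℝ^d`. -/
def MemPPlusOdd (d : ℕ) (m : ℕ) (p : E d → ℝ) : Prop :=
  MemPOdd d m p ∧ DistLapLE d univ p

/-- `P⁺_m`, split by parity. -/
def MemPPlus (d : ℕ) (m : ℕ) (p : E d → ℝ) : Prop :=
  if m % 2 = 0 then MemPPlusEven d m p else MemPPlusOdd d m p

/-- `L²(S^{d-1})` norm. -/
def sphL2 (d : ℕ) (p : E d → ℝ) : ℝ :=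
  Real.sqrt (∫ x in sphere (0 : E d) 1, p x ^ 2 ∂μH[(d : ℝ) - 1])

/-- `H¹(B_ρ)` norm. -/
def H1 (d : ℕ) (ρ : ℝ) (w : E d → ℝ) : ℝ :=
  Real.sqrt (∫ x in ball (0 : E d) ρ, (w x ^ 2 + ‖gradient w x‖ ^ 2))

/-- The boundary layer `L_η = {|x_d| < η |x|}`. -/
def Leta (d : ℕ) (η : ℝ) : Set (E d) := {x | |lastCoord d x| < η * ‖x‖}

/-- `S_η^+ ∪ S_η^-`. -/
def Seta (d : ℕ) (η : ℝ) : Set (E d) := {x | |lastCoord d x| = η * ‖x‖}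

/-- `S_η^+`. -/
def SetaPlus (d : ℕ) (η : ℝ) : Set (E d) := {x | lastCoord d x = η * ‖x‖}

/-- Locally Lipschitz away from the origin. -/
def LocLipAway (d : ℕ) (W : E d → ℝ) : Prop :=
  ∀ x : E d, x ≠ 0 → ∃ (K : ℝ≥0) (t : Set (E d)), t ∈ 𝓝 x ∧ LipschitzOnWith K W t

/-- For an `m`-homogeneous `W`, this is a positive multiple of the spherical energy
`∫_{S^{d-1}} |∇_S W|² - λ(m) W²`, expressed through the bulk Dirichlet integral:
`∫_S |∇_S W|² - λ(m) W² = (d+2m-2) ∫_{B_1} |∇W|² - (m² + m(m+d-2)) ∫_S W²`. -/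
def sphEnergy (d : ℕ) (m : ℕ) (W : E d → ℝ) : ℝ :=
  ((d : ℝ) + 2 * m - 2) * (∫ x in ball (0 : E d) 1, ‖gradient W x‖ ^ 2) -
    ((m : ℝ) ^ 2 + (m : ℝ) * ((m : ℝ) + (d : ℝ) - 2)) *
      ∫ x in sphere (0 : E d) 1, W x ^ 2 ∂μH[(d : ℝ) - 1]

/-- `η` is small enough that `Δ_{S^{d-1}} + λ(m)` is coercive (has negative first
Dirichlet eigenvalue) on the boundary layer `L_η ∩ S^{d-1}`. -/
def EtaAdmissible (d : ℕ) (m : ℕ) (η : ℝ) : Prop :=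
  0 < η ∧ η < 1 ∧
  ∀ W : E d → ℝ, HomOfDeg d m W → LocLipAway d W →
    (∀ x, x ∉ Leta d η → W x = 0) → (∃ x ∈ sphere (0 : E d) 1, W x ≠ 0) →
    0 < sphEnergy d m W

/-- Admissible competitors in the boundary-layer minimization defining the
replacement of `p`. -/
def Competitor (d : ℕ) (m : ℕ) (η : ℝ) (p W : E d → ℝ) : Prop :=
  HomOfDeg d m W ∧ EvenXd d W ∧ LocLipAway d W ∧
  (∀ x, lastCoord d x = 0 → 0 ≤ W x) ∧ ∀ x, x ∉ Leta d η → W x = p x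

/-- `pbar` is the replacement `p̄` of `p`: the energy minimizer among competitors. -/
def IsReplacement (d : ℕ) (m : ℕ) (η : ℝ) (p pbar : E d → ℝ) : Prop :=
  Competitor d m η p pbar ∧
  ∀ W, Competitor d m η p W → sphEnergy d m pbar ≤ sphEnergy d m W

/-- `Δp̄ = f dH^{d-1}|_{S_η^±} + g dH^{d-1}|_{x_d = 0}` as measures, with `f`
continuous away from the origin and `(m-1)`-homogeneous on the cone. -/
def LapDecomp (d : ℕ) (m : ℕ) (η : ℝ) (pbar f g : E d → ℝ) : Prop :=
  ContinuousOn f (Seta d η \ {0}) ∧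
  (∀ r : ℝ, 0 < r → ∀ x ∈ Seta d η, f (r • x) = r ^ ((m : ℝ) - 1) * f x) ∧
  ∀ φ : E d → ℝ, ContDiff ℝ (⊤ : ℕ∞) φ → HasCompactSupport φ →
    (∫ x, pbar x * lap d φ x) =
      (∫ x in Seta d η, f x * φ x ∂μH[(d : ℝ) - 1]) +
        ∫ x in {y : E d | lastCoord d y = 0}, g x * φ x ∂μH[(d : ℝ) - 1]

/-- Full replacement data for `p`: the replacement `p̄`, the densities `f, g` of
`Δp̄`, and `κ_p = ∫_{S_η^+ ∩ S^{d-1}} f dH^{d-2}`. -/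
def ReplacementData (d : ℕ) (m : ℕ) (η : ℝ) (p pbar f g : E d → ℝ) (κ : ℝ) : Prop :=
  IsReplacement d m η p pbar ∧ LapDecomp d m η pbar f g ∧
  κ = ∫ x in SetaPlus d η ∩ sphere (0 : E d) 1, f x ∂μH[(d : ℝ) - 2]

/-- `u ∈ S_m(p, ε, r)`, i.e. `δ(u_r, p) = max{‖u_r - p̄‖_{H¹(B_1)}, κ_p} < ε`. -/
def InS (d : ℕ) (m : ℕ) (u pbar : E d → ℝ) (κ ε r : ℝ) : Prop :=
  max (H1 d 1 fun x => u (r • x) / r ^ m - pbar x) κ < ε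

/-- `p` is the blow-up profile of `u` at `q` with frequency `m`. -/
def IsBlowUp (d : ℕ) (m : ℕ) (u : E d → ℝ) (q : E d) (p : E d → ℝ) : Prop :=
  MemPPlus d m p ∧ p ≠ 0 ∧
  (fun x => u (q + x) - p x) =o[𝓝 (0 : E d)] fun x => ‖x‖ ^ m

/-- The spine (translation-invariance set) of `p` inside `{x_d = 0}`. -/
def spine (d : ℕ) (p : E d → ℝ) : Set (E d) :=
  {ξ | lastCoord d ξ = 0 ∧ ∀ x, p (x + ξ) = p x}

/-- Dimension of the spine. -/
def spineDim (d : ℕ) (p : E d → ℝ) : ℕ :=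
  Module.finrank ℝ (Submodule.span ℝ (spine d p))

/-- The stratum `Λ_m^j(u)`. -/
def Stratum (d : ℕ) (m : ℕ) (u : E d → ℝ) (j : ℕ) : Set (E d) :=
  {q | q ∈ Lam d u (m : ℝ) ∧ ∃ p, IsBlowUp d m u q p ∧ spineDim d p = j}

lemma tangent_rpow {θ x y : ℝ} (hθ0 : 0 < θ) (hθ1 : θ ≤ 1) (hx : 0 < x)
    (hy : 0 ≤ y) (hyx : y ≤ x) :
    θ * (x - y) * x ^ (θ - 1) ≤ x ^ θ - y ^ θ := by
  have hgm := Real.geom_mean_le_arith_mean2_weighted hθ0.le (by linarith : (0:ℝ) ≤ 1 - θ)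
      (div_nonneg hy hx.le) zero_le_one (by ring)
  rw [Real.one_rpow, mul_one, mul_one] at hgm
  have hxθ : (0:ℝ) < x ^ θ := Real.rpow_pos_of_pos hx θ
  have h1 : y ^ θ = (y / x) ^ θ * x ^ θ := by
    rw [Real.div_rpow hy hx.le]
    field_simp
  have h3 : x ^ θ = x * x ^ (θ - 1) := by
    nth_rewrite 1 [show θ = 1 + (θ - 1) by ring]
    rw [Real.rpow_add hx, Real.rpow_one]
  have h2 : x ^ θ * (y / x) = y * x ^ (θ - 1) := by
    rw [h3]; field_simp
  have hmul := mul_le_mul_of_nonneg_right hgm hxθ.le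
  rw [← h1] at hmul
  nlinarith [hmul, h2, h3]


lemma step_rpow_diff {α : ℝ} (hα : 0 < α) {n : ℝ} (hn : 1 ≤ n) :
    n ^ (-α) - (n + 1) ^ (-α) ≤ (1 + α) * n ^ (-α) / (n + 1) := by
  have hn0 : (0:ℝ) < n := lt_of_lt_of_le one_pos hn
  have hn1 : (0:ℝ) < n + 1 := by linarith
  have hb0 : (0:ℝ) < n / (n + 1) := div_pos hn0 hn1
  have hb1 : n / (n + 1) ≤ 1 := by rw [div_le_one hn1]; linarith
  have key : 1 - (n / (n + 1)) ^ α ≤ (1 + α) / (n + 1) := by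
    rcases le_total α 1 with h | h
    · have h4 := Real.rpow_le_rpow_of_exponent_ge hb0 hb1 h
      rw [Real.rpow_one] at h4
      have h5 : 1 - n / (n + 1) = 1 / (n + 1) := by field_simp; ring
      have h6 : (1:ℝ) / (n+1) ≤ (1 + α) / (n + 1) := by gcongr; linarith
      linarith
    · have hs : (-1:ℝ) ≤ -(1 / (n + 1)) := by
        rw [neg_le_neg_iff, div_le_one hn1]; linarith
      have hB := one_add_mul_self_le_rpow_one_add hs h
      have he : 1 + -(1 / (n + 1)) = n / (n + 1) := by field_simp; ring
      rw [he] at hB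
      have h7 : α / (n+1) ≤ (1+α)/(n+1) := by gcongr; linarith
      have h8 : 1 + α * -(1 / (n + 1)) = 1 - α/(n+1) := by ring
      linarith [hB, h7, h8 ▸ hB]
  have hsplit : (n + 1) ^ (-α) = n ^ (-α) * (n / (n + 1)) ^ α := by
    rw [Real.div_rpow hn0.le hn1.le, Real.rpow_neg hn0.le, Real.rpow_neg hn1.le]
    have h9 : (0:ℝ) < n ^ α := Real.rpow_pos_of_pos hn0 α
    have h10 : (0:ℝ) < (n+1) ^ α := Real.rpow_pos_of_pos hn1 α
    field_simp
  have hpos : (0:ℝ) ≤ n ^ (-α) := Real.rpow_nonneg hn0.le _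
  calc n ^ (-α) - (n + 1) ^ (-α) = n ^ (-α) * (1 - (n / (n + 1)) ^ α) := by
        rw [hsplit]; ring
    _ ≤ n ^ (-α) * ((1 + α) / (n + 1)) := by
        apply mul_le_mul_of_nonneg_left key hpos
    _ = (1 + α) * n ^ (-α) / (n + 1) := by ring


lemma ode_decay {q μ D : ℝ} (hq : 1 < q) (hμ : 0 < μ) (hD : 0 < D)
    (hDp : (1 + 1 / (q - 1)) * 2 ^ (1 / (q - 1)) / μ ≤ D ^ (q - 1))
    {x : ℕ → ℝ} (hx0 : ∀ n, 0 ≤ x n) (hx1 : x 1 ≤ D)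
    (hstep : ∀ n, 1 ≤ n → x (n + 1) ≤ x n - μ * x n ^ q) :
    ∀ N, 1 ≤ N → x N ≤ D * (N : ℝ) ^ (-(1 / (q - 1))) := by
  set α := 1 / (q - 1) with hαdef
  have hq1 : (0:ℝ) < q - 1 := by linarith
  have hα : 0 < α := by positivity
  intro N hN
  induction N, hN using Nat.le_induction with
  | base => simpa [Real.one_rpow] using hx1
  | succ N hN IH =>
    have hNR : (1:ℝ) ≤ (N:ℝ) := by exact_mod_cast hN
    have hN0 : (0:ℝ) < (N:ℝ) := by linarith
    have hN1 : (0:ℝ) < (N:ℝ) + 1 := by linarith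
    have hcast : ((N + 1 : ℕ) : ℝ) = (N:ℝ) + 1 := by push_cast; ring
    rw [hcast]
    have hxq : 0 ≤ μ * x N ^ q := mul_nonneg hμ.le (Real.rpow_nonneg (hx0 N) q)
    have hstepN := hstep N hN
    rcases le_or_gt (x N) (D * ((N:ℝ) + 1) ^ (-α)) with h | h
    · linarith
    · have hy1 : (0:ℝ) ≤ D * ((N:ℝ) + 1) ^ (-α) :=
        mul_nonneg hD.le (Real.rpow_nonneg hN1.le _)
      have hmono : (D * ((N:ℝ) + 1) ^ (-α)) ^ q ≤ x N ^ q :=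
        Real.rpow_le_rpow hy1 h.le (by linarith)
      have h1 : x (N + 1) ≤ D * (N:ℝ) ^ (-α) - μ * (D * ((N:ℝ) + 1) ^ (-α)) ^ q := by
        have := mul_le_mul_of_nonneg_left hmono hμ.le
        linarith [IH]
      have hαq : -α * q = -α + -1 := by
        have : α * q = α + 1 := by
          rw [hαdef]; field_simp; ring
        linarith
      have hmul : (D * ((N:ℝ) + 1) ^ (-α)) ^ q
          = D ^ q * (((N:ℝ) + 1) ^ (-α) * ((N:ℝ) + 1)⁻¹) := by
        rw [Real.mul_rpow hD.le (Real.rpow_nonneg hN1.le _)]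
        congr 1
        rw [← Real.rpow_mul hN1.le, hαq, Real.rpow_add hN1, Real.rpow_neg_one]
      -- key inequality: D * N^{-α} - D * (N+1)^{-α} ≤ μ * D^q * (N+1)^{-α-1}
      have hdiff := step_rpow_diff hα hNR
      have hcompare : ((2:ℝ))⁻¹ ^ α * (N:ℝ) ^ (-α) ≤ ((N:ℝ) + 1) ^ (-α) := by
        have h2N : (N:ℝ) + 1 ≤ 2 * (N:ℝ) := by linarith
        have := Real.rpow_le_rpow_of_nonpos hN1 h2N (by linarith : -α ≤ 0)
        rw [Real.mul_rpow (by norm_num) hN0.le] at this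
        calc ((2:ℝ))⁻¹ ^ α * (N:ℝ) ^ (-α) = (2:ℝ) ^ (-α) * (N:ℝ) ^ (-α) := by
              rw [← Real.rpow_neg_one 2, ← Real.rpow_mul (by norm_num : (0:ℝ) ≤ 2)]
              norm_num
          _ ≤ ((N:ℝ) + 1) ^ (-α) := this
      have hDq : D ^ q = D ^ (q - 1) * D := by
        nth_rewrite 1 [show q = (q - 1) + 1 by ring]
        rw [Real.rpow_add hD, Real.rpow_one]
      have h2α : (0:ℝ) < (2:ℝ) ^ α := Real.rpow_pos_of_pos two_pos α
      have h2αinv : (0:ℝ) < ((2:ℝ))⁻¹ ^ α := Real.rpow_pos_of_pos (by norm_num) α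
      have h2inv : (2:ℝ) ^ α * ((2:ℝ))⁻¹ ^ α = 1 := by
        rw [← Real.mul_rpow (by norm_num) (by norm_num)]
        norm_num
      have hNα : (0:ℝ) ≤ (N:ℝ) ^ (-α) := Real.rpow_nonneg hN0.le _
      -- from hDp : (1+α) * 2^α / μ ≤ D^(q-1)
      have hkey : (1 + α) * D ≤ μ * D ^ (q - 1) * D * ((2:ℝ))⁻¹ ^ α := by
        have := mul_le_mul_of_nonneg_left hDp (le_of_lt hμ)
        rw [mul_div_cancel₀ _ (ne_of_gt hμ)] at this
        -- this : (1+α) * 2^α ≤ μ * D^(q-1)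
        have h' := mul_le_mul_of_nonneg_right this (mul_nonneg hD.le h2αinv.le)
        calc (1 + α) * D = (1 + α) * 2 ^ α * ((2:ℝ))⁻¹ ^ α * D := by
              rw [mul_assoc ((1:ℝ)+α), h2inv]; ring
          _ ≤ μ * D ^ (q - 1) * (D * ((2:ℝ))⁻¹ ^ α) := by
              calc (1 + α) * 2 ^ α * ((2:ℝ))⁻¹ ^ α * D
                  = (1 + α) * 2 ^ α * (D * ((2:ℝ))⁻¹ ^ α) := by ring
                _ ≤ μ * D ^ (q - 1) * (D * ((2:ℝ))⁻¹ ^ α) := h'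
          _ = μ * D ^ (q - 1) * D * ((2:ℝ))⁻¹ ^ α := by ring
      -- assemble
      have hfinal : D * (N:ℝ) ^ (-α) - D * ((N:ℝ) + 1) ^ (-α)
          ≤ μ * (D ^ q * (((N:ℝ) + 1) ^ (-α) * ((N:ℝ) + 1)⁻¹)) := by
        have lhs_le : D * (N:ℝ) ^ (-α) - D * ((N:ℝ) + 1) ^ (-α)
            ≤ (1 + α) * D * ((N:ℝ) ^ (-α) / ((N:ℝ) + 1)) := by
          have := mul_le_mul_of_nonneg_left hdiff hD.le
          calc D * (N:ℝ) ^ (-α) - D * ((N:ℝ) + 1) ^ (-α)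
              = D * ((N:ℝ) ^ (-α) - ((N:ℝ) + 1) ^ (-α)) := by ring
            _ ≤ D * ((1 + α) * (N:ℝ) ^ (-α) / ((N:ℝ) + 1)) := this
            _ = (1 + α) * D * ((N:ℝ) ^ (-α) / ((N:ℝ) + 1)) := by ring
        have rhs_ge : μ * (D ^ q * (((N:ℝ) + 1) ^ (-α) * ((N:ℝ) + 1)⁻¹))
            ≥ (1 + α) * D * ((N:ℝ) ^ (-α) / ((N:ℝ) + 1)) := by
          have hc := mul_le_mul_of_nonneg_right hcompare (by positivity : (0:ℝ) ≤ ((N:ℝ)+1)⁻¹)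
          -- hc : 2⁻¹^α * N^{-α} * (N+1)⁻¹ ≤ (N+1)^{-α} * (N+1)⁻¹
          have hk := mul_le_mul_of_nonneg_right hkey
              (mul_nonneg hNα (by positivity : (0:ℝ) ≤ ((N:ℝ)+1)⁻¹))
          -- hk : (1+α)*D*(N^{-α} * (N+1)⁻¹) ≤ μ*D^{q-1}*D*2⁻¹^α*(N^{-α}*(N+1)⁻¹)
          have hstep2 : μ * D ^ (q-1) * D * ((2:ℝ))⁻¹ ^ α * ((N:ℝ) ^ (-α) * ((N:ℝ)+1)⁻¹)
              ≤ μ * D ^ (q-1) * D * (((N:ℝ) + 1) ^ (-α) * ((N:ℝ) + 1)⁻¹) := by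
            have hμD : (0:ℝ) ≤ μ * D ^ (q-1) * D :=
              mul_nonneg (mul_nonneg hμ.le (Real.rpow_nonneg hD.le _)) hD.le
            calc μ * D ^ (q-1) * D * ((2:ℝ))⁻¹ ^ α * ((N:ℝ) ^ (-α) * ((N:ℝ)+1)⁻¹)
                = μ * D ^ (q-1) * D * (((2:ℝ))⁻¹ ^ α * (N:ℝ) ^ (-α) * ((N:ℝ)+1)⁻¹) := by ring
              _ ≤ μ * D ^ (q-1) * D * (((N:ℝ) + 1) ^ (-α) * ((N:ℝ) + 1)⁻¹) :=
                  mul_le_mul_of_nonneg_left hc hμD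
          calc (1 + α) * D * ((N:ℝ) ^ (-α) / ((N:ℝ) + 1))
              = (1 + α) * D * ((N:ℝ) ^ (-α) * ((N:ℝ)+1)⁻¹) := by ring
            _ ≤ μ * D ^ (q-1) * D * ((2:ℝ))⁻¹ ^ α * ((N:ℝ) ^ (-α) * ((N:ℝ)+1)⁻¹) := hk
            _ ≤ μ * D ^ (q-1) * D * (((N:ℝ) + 1) ^ (-α) * ((N:ℝ) + 1)⁻¹) := hstep2
            _ = μ * (D ^ q * (((N:ℝ) + 1) ^ (-α) * ((N:ℝ) + 1)⁻¹)) := by rw [hDq]; ring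
        linarith
      rw [hmul] at h1
      linarith


noncomputable def cTh (γ : ℝ) : ℝ := γ / (1 + γ)
noncomputable def cLam (γ A a : ℝ) : ℝ := 4 * A ^ 2 / (cTh γ * a)
noncomputable def cB (A a : ℝ) : ℝ := A * (1 + Real.sqrt (A / a))
noncomputable def cK (γ A a : ℝ) : ℝ := cB A a + cLam γ A a * (4 * A) ^ cTh γ
noncomputable def cMu (γ A a : ℝ) : ℝ := (1 / 2) / cK γ A a ^ (1 / γ)
noncomputable def cX (γ A a : ℝ) : ℝ := A + cLam γ A a * A
noncomputable def Phi (γ A a : ℝ) (w e : ℕ → ℝ) (n : ℕ) : ℝ :=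
  e n + cLam γ A a * w n ^ cTh γ

lemma cTh_pos {γ A a : ℝ} (hγ : 0 < γ) (hγ1 : γ ≤ 1) : 0 < cTh γ := by
  unfold cTh; positivity

lemma cTh_le_one {γ A a : ℝ} (hγ : 0 < γ) (hγ1 : γ ≤ 1) : cTh γ ≤ 1 := by
  unfold cTh
  rw [div_le_one (by linarith)]; linarith

lemma cTh_identity {γ A a : ℝ} (hγ : 0 < γ) (hγ1 : γ ≤ 1) : (1 + γ) * (cTh γ - 1) = -1 := by
  unfold cTh
  field_simp
  ring

lemma cTh_identity2 {γ A a : ℝ} (hγ : 0 < γ) (hγ1 : γ ≤ 1) : (1 + γ) * cTh γ = γ := by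
  unfold cTh; field_simp

lemma cLam_pos {γ A a : ℝ} (hγ : 0 < γ) (hγ1 : γ ≤ 1) (hA : 1 ≤ A) (ha : 0 < a) :
    0 < cLam γ A a := by
  unfold cLam
  have := cTh_pos (A := A) (a := a) hγ hγ1
  positivity

lemma cB_one_le {γ A a : ℝ} (hγ : 0 < γ) (hγ1 : γ ≤ 1) (hA : 1 ≤ A) (ha : 0 < a) :
    1 ≤ cB A a := by
  unfold cB
  nlinarith [Real.sqrt_nonneg (A / a)]

lemma cK_one_le {γ A a : ℝ} (hγ : 0 < γ) (hγ1 : γ ≤ 1) (hA : 1 ≤ A) (ha : 0 < a) :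
    1 ≤ cK γ A a := by
  unfold cK
  have h1 := cB_one_le (γ := γ) hγ hγ1 hA ha
  have h2 := cLam_pos hγ hγ1 hA ha
  have h3 : (0:ℝ) < (4 * A) ^ cTh γ := Real.rpow_pos_of_pos (by linarith) _
  nlinarith

lemma cKq_one_le {γ A a : ℝ} (hγ : 0 < γ) (hγ1 : γ ≤ 1) (hA : 1 ≤ A) (ha : 0 < a) :
    1 ≤ cK γ A a ^ (1 / γ) :=
  Real.one_le_rpow (cK_one_le hγ hγ1 hA ha) (by positivity)

lemma cMu_pos {γ A a : ℝ} (hγ : 0 < γ) (hγ1 : γ ≤ 1) (hA : 1 ≤ A) (ha : 0 < a) :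
    0 < cMu γ A a := by
  unfold cMu
  have := cKq_one_le hγ hγ1 hA ha
  positivity

lemma cMu_le_half {γ A a : ℝ} (hγ : 0 < γ) (hγ1 : γ ≤ 1) (hA : 1 ≤ A) (ha : 0 < a) :
    cMu γ A a ≤ 1 / 2 := by
  unfold cMu
  have h := cKq_one_le hγ hγ1 hA ha
  rw [div_le_div_iff₀ (by linarith) (by norm_num)]
  linarith

lemma cX_one_le {γ A a : ℝ} (hγ : 0 < γ) (hγ1 : γ ≤ 1) (hA : 1 ≤ A) (ha : 0 < a) :
    1 ≤ cX γ A a := by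
  unfold cX
  have := cLam_pos hγ hγ1 hA ha
  nlinarith


set_option maxHeartbeats 2000000 in
lemma seq_facts (γ A a : ℝ) (hγ : 0 < γ) (hγ1 : γ ≤ 1) (hA : 1 ≤ A) (ha : 0 < a)
    (w e : ℕ → ℝ) (hw : ∀ n, 0 ≤ w n) (he : ∀ n, 0 ≤ e n) (he0 : e 0 ≤ 1)
    (hwe : ∀ n, w (n + 1) ≤ A * e n ^ (1 + γ))
    (hdich : ∀ n, (w (n + 1) ≤ w n - a * e n ^ 2 ∧ e (n + 1) = A * e n) ∨
        (w (n + 1) ≤ w n ∧ e (n + 1) = e n / 2)) :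
    (∀ n, 0 ≤ Phi γ A a w e n) ∧
    (∀ N, 1 ≤ N → ∀ M, (∑ i ∈ Finset.range M, e (N + i)) ≤ 2 * Phi γ A a w e N) ∧
    (Phi γ A a w e 1 ≤ A * e 0 + cLam γ A a * A ^ cTh γ * e 0 ^ γ) ∧
    (Phi γ A a w e 1 ≤ cX γ A a) ∧
    (∀ n, 1 ≤ n →
      Phi γ A a w e (n + 1) ≤ Phi γ A a w e n - cMu γ A a * Phi γ A a w e n ^ (1 / γ)) := by
  have hθ0 : 0 < cTh γ := cTh_pos (A := A) (a := a) hγ hγ1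
  have hθ1 : cTh γ ≤ 1 := cTh_le_one (A := A) (a := a) hγ hγ1
  have hlam : 0 < cLam γ A a := cLam_pos hγ hγ1 hA ha
  have hB1 : 1 ≤ cB A a := cB_one_le hγ hγ1 hA ha
  have hK1 : 1 ≤ cK γ A a := cK_one_le hγ hγ1 hA ha
  have hA0 : (0:ℝ) < A := by linarith
  have h4A : (1:ℝ) ≤ 4 * A := by linarith
  -- F1 : w is non-increasing
  have F1 : ∀ n, w (n + 1) ≤ w n := by
    intro n
    rcases hdich n with ⟨h1, _⟩ | ⟨h1, _⟩
    · nlinarith [sq_nonneg (e n), he n]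
    · exact h1
  have hanti : Antitone w := antitone_nat_of_succ_le F1
  -- F2 : for n ≥ 1, w n ≤ A
  have F2 : ∀ n, 1 ≤ n → w n ≤ A := by
    intro n hn
    have h1 : w n ≤ w 1 := hanti hn
    have h2 : e 0 ^ (1 + γ) ≤ 1 := Real.rpow_le_one (he 0) he0 (by linarith)
    have h3 := hwe 0
    nlinarith
  -- F3 : e n ≤ cB A a
  have F3 : ∀ n, e n ≤ cB A a := by
    intro n
    induction n with
    | zero => linarith
    | succ n IH =>
      rcases hdich n with ⟨h1, h2⟩ | ⟨h1, h2⟩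
      ·
        rcases Nat.eq_zero_or_pos n with rfl | hn
        · rw [h2]
          unfold cB
          nlinarith [Real.sqrt_nonneg (A / a), he 0]
        · -- a * e n ^ 2 ≤ w n ≤ A
          have hwn : a * e n ^ 2 ≤ A := by
            have := hw (n + 1)
            have := F2 n hn
            nlinarith
          have hen : e n ≤ Real.sqrt (A / a) := by
            rw [show Real.sqrt (A / a) = Real.sqrt (A/a) from rfl]
            have h5 : e n ^ 2 ≤ A / a := by
              rw [le_div_iff₀ ha]; nlinarith
            calc e n = Real.sqrt (e n ^ 2) := by
                  rw [Real.sqrt_sq (he n)]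
              _ ≤ Real.sqrt (A / a) := Real.sqrt_le_sqrt h5
          rw [h2]
          unfold cB
          nlinarith [he n]
      · rw [h2]; linarith [he n]
  -- F4 : e n ≤ 2 * e (n+1)
  have F4 : ∀ n, e n ≤ 2 * e (n + 1) := by
    intro n
    rcases hdich n with ⟨_, h2⟩ | ⟨_, h2⟩
    · rw [h2]; nlinarith [he n]
    · rw [h2]; linarith [he n]
  -- F5 : w (n+1) ≤ 4 * A * e (n+1) ^ (1 + γ)
  have F5 : ∀ n, w (n + 1) ≤ 4 * A * e (n + 1) ^ (1 + γ) := by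
    intro n
    have h1 : e n ^ (1 + γ) ≤ (2 * e (n + 1)) ^ (1 + γ) :=
      Real.rpow_le_rpow (he n) (F4 n) (by linarith)
    have h2 : (2 * e (n + 1)) ^ (1 + γ) = 2 ^ (1 + γ) * e (n + 1) ^ (1 + γ) :=
      Real.mul_rpow (by norm_num) (he (n + 1))
    have h3 : (2:ℝ) ^ (1 + γ) ≤ 4 := by
      have h4 : (2:ℝ) ^ (1 + γ) = 2 * 2 ^ γ := by
        rw [Real.rpow_add two_pos, Real.rpow_one]
      have h5 : (2:ℝ) ^ γ ≤ 2 ^ (1:ℝ) :=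
        Real.rpow_le_rpow_of_exponent_le one_le_two hγ1
      rw [Real.rpow_one] at h5
      nlinarith
    have h6 : (0:ℝ) ≤ e (n+1) ^ (1 + γ) := Real.rpow_nonneg (he _) _
    calc w (n + 1) ≤ A * e n ^ (1 + γ) := hwe n
      _ ≤ A * (2 ^ (1 + γ) * e (n + 1) ^ (1 + γ)) := by
          rw [← h2]; exact mul_le_mul_of_nonneg_left h1 hA0.le
      _ ≤ A * (4 * e (n + 1) ^ (1 + γ)) := by
          have h7 := mul_le_mul_of_nonneg_right h3 h6
          exact mul_le_mul_of_nonneg_left h7 hA0.le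
      _ = 4 * A * e (n + 1) ^ (1 + γ) := by ring
  -- F6 : e n = 0 → w n = 0  (n ≥ 1)
  have F6 : ∀ n, e (n + 1) = 0 → w (n + 1) = 0 := by
    intro n hzero
    have hen : e n = 0 := by
      rcases hdich n with ⟨_, h2⟩ | ⟨_, h2⟩
      · rw [hzero] at h2
        nlinarith [he n]
      · rw [hzero] at h2
        linarith [he n]
    have h1 := hwe n
    rw [hen, Real.zero_rpow (by positivity : (1:ℝ) + γ ≠ 0)] at h1
    have := hw (n + 1)
    linarith [h1]
  -- Phi is nonnegative
  have hPhi0 : ∀ n, 0 ≤ Phi γ A a w e n := by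
    intro n
    unfold Phi
    have := Real.rpow_nonneg (hw n) (cTh γ)
    nlinarith [he n]
  -- the descent inequality
  have hdesc : ∀ n, 1 ≤ n → Phi γ A a w e (n + 1) ≤ Phi γ A a w e n - e n / 2 := by
    intro n hn
    rcases hdich n with ⟨hgw, hge⟩ | ⟨hhw, hhe⟩
    · -- growth step
      by_cases hz : e n = 0
      · -- degenerate: everything is zero
        obtain ⟨m, rfl⟩ : ∃ m, n = m + 1 := ⟨n - 1, (Nat.succ_pred_eq_of_pos hn).symm⟩
        have hwn : w (m + 1) = 0 := F6 m hz
        have hwn1 : w (m + 1 + 1) = 0 := by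
          have h1 : w (m + 1 + 1) ≤ 0 := by
            rw [hz] at hgw
            rw [hwn] at hgw
            simpa using hgw
          linarith [hw (m + 1 + 1)]
        unfold Phi
        rw [hge, hz, hwn, hwn1, Real.zero_rpow hθ0.ne']
        simp
      · have hepos : 0 < e n := lt_of_le_of_ne (he n) (Ne.symm hz)
        have hae : 0 < a * e n ^ 2 := by positivity
        have hwpos : 0 < w n := by nlinarith [hw (n + 1)]
        have hwle : w (n + 1) ≤ w n := F1 n
        have htan := tangent_rpow hθ0 hθ1 hwpos (hw (n + 1)) hwle
        -- lower bound on w n ^ (cTh γ - 1)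
        obtain ⟨m, rfl⟩ : ∃ m, n = m + 1 := ⟨n - 1, (Nat.succ_pred_eq_of_pos hn).symm⟩
        have hF5 : w (m + 1) ≤ 4 * A * e (m + 1) ^ (1 + γ) := F5 m
        have hwexp : (4 * A * e (m + 1) ^ (1 + γ)) ^ (cTh γ - 1) ≤ w (m + 1) ^ (cTh γ - 1) :=
          Real.rpow_le_rpow_of_nonpos hwpos hF5 (by linarith)
        have hE : (0:ℝ) < e (m + 1) ^ (1 + γ) := Real.rpow_pos_of_pos hepos _
        have hsplit : (4 * A * e (m + 1) ^ (1 + γ)) ^ (cTh γ - 1)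
            = (4 * A) ^ (cTh γ - 1) * (e (m + 1))⁻¹ := by
          rw [Real.mul_rpow (by linarith : (0:ℝ) ≤ 4 * A) hE.le]
          congr 1
          have h9 : (e (m+1) ^ (1+γ)) ^ (cTh γ - 1) = e (m+1) ^ ((1+γ) * (cTh γ - 1)) :=
            (Real.rpow_mul (he (m + 1)) _ _).symm
          rw [h9, cTh_identity (A := A) (a := a) hγ hγ1, Real.rpow_neg_one]
        have h4Ainv : (4 * A)⁻¹ ≤ (4 * A) ^ (cTh γ - 1) := by
          have := Real.rpow_le_rpow_of_exponent_le h4A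
            (by linarith : (-1:ℝ) ≤ cTh γ - 1)
          rwa [Real.rpow_neg_one] at this
        have hdrop : cTh γ * (a * e (m + 1) ^ 2) * ((4 * A)⁻¹ * (e (m + 1))⁻¹)
            ≤ w (m + 1) ^ cTh γ - w (m + 1 + 1) ^ cTh γ := by
          have hlow : (4 * A)⁻¹ * (e (m + 1))⁻¹ ≤ w (m + 1) ^ (cTh γ - 1) := by
            rw [hsplit] at hwexp
            have : (4 * A)⁻¹ * (e (m + 1))⁻¹ ≤ (4 * A) ^ (cTh γ - 1) * (e (m + 1))⁻¹ :=
              mul_le_mul_of_nonneg_right h4Ainv (by positivity)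
            linarith
          have hd : a * e (m + 1) ^ 2 ≤ w (m + 1) - w (m + 1 + 1) := by linarith
          calc cTh γ * (a * e (m + 1) ^ 2) * ((4 * A)⁻¹ * (e (m + 1))⁻¹)
              ≤ cTh γ * (w (m + 1) - w (m + 1 + 1)) * w (m + 1) ^ (cTh γ - 1) := by
                apply mul_le_mul
                · exact mul_le_mul_of_nonneg_left hd hθ0.le
                · exact hlow
                · positivity
                · exact mul_nonneg hθ0.le (by linarith)
            _ ≤ w (m + 1) ^ cTh γ - w (m + 1 + 1) ^ cTh γ := htan
        -- cLam * drop ≥ A * e n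
        have hsimp : cLam γ A a * (cTh γ * (a * e (m + 1) ^ 2) * ((4 * A)⁻¹ * (e (m + 1))⁻¹))
            = A * e (m + 1) := by
          unfold cLam
          field_simp
        have hlamdrop : A * e (m + 1)
            ≤ cLam γ A a * (w (m + 1) ^ cTh γ - w (m + 1 + 1) ^ cTh γ) := by
          rw [← hsimp]
          exact mul_le_mul_of_nonneg_left hdrop hlam.le
        rw [mul_sub] at hlamdrop
        unfold Phi
        rw [hge]
        linarith [he (m + 1)]
    · -- halving step
      unfold Phi
      rw [hhe]
      have h1 : w (n + 1) ^ cTh γ ≤ w n ^ cTh γ :=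
        Real.rpow_le_rpow (hw (n + 1)) hhw hθ0.le
      have h2 := mul_le_mul_of_nonneg_left h1 hlam.le
      linarith [he n]
  -- block sums
  have hblock : ∀ N, 1 ≤ N → ∀ M, (∑ i ∈ Finset.range M, e (N + i)) ≤ 2 * Phi γ A a w e N := by
    intro N hN M
    have hb : ∀ M, (∑ i ∈ Finset.range M, e (N + i))
        ≤ 2 * (Phi γ A a w e N - Phi γ A a w e (N + M)) := by
      intro M
      induction M with
      | zero => simp
      | succ M IH =>
        rw [Finset.sum_range_succ]
        have hd := hdesc (N + M) (le_trans hN (Nat.le_add_right N M))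
        have : e (N + M) ≤ 2 * (Phi γ A a w e (N + M) - Phi γ A a w e (N + M + 1)) := by
          linarith
        have heq : N + (M + 1) = N + M + 1 := by omega
        rw [heq]
        linarith
    calc (∑ i ∈ Finset.range M, e (N + i))
        ≤ 2 * (Phi γ A a w e N - Phi γ A a w e (N + M)) := hb M
      _ ≤ 2 * Phi γ A a w e N := by linarith [hPhi0 (N + M)]
  -- bound on Phi 1
  have hPhi1 : Phi γ A a w e 1 ≤ A * e 0 + cLam γ A a * A ^ cTh γ * e 0 ^ γ := by
    unfold Phi
    have he1 : e 1 ≤ A * e 0 := by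
      rcases hdich 0 with ⟨_, h2⟩ | ⟨_, h2⟩
      · rw [h2]
      · rw [h2]; nlinarith [he 0]
    have hw1 : w 1 ^ cTh γ ≤ A ^ cTh γ * e 0 ^ γ := by
      have h1 : w 1 ^ cTh γ ≤ (A * e 0 ^ (1 + γ)) ^ cTh γ :=
        Real.rpow_le_rpow (hw 1) (hwe 0) hθ0.le
      have h2 : (A * e 0 ^ (1 + γ)) ^ cTh γ = A ^ cTh γ * e 0 ^ γ := by
        rw [Real.mul_rpow hA0.le (Real.rpow_nonneg (he 0) _)]
        congr 1
        rw [← Real.rpow_mul (he 0), cTh_identity2 (A := A) (a := a) hγ hγ1]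
      rw [h2] at h1
      exact h1
    have := mul_le_mul_of_nonneg_left hw1 hlam.le
    linarith
  have hPhi1X : Phi γ A a w e 1 ≤ cX γ A a := by
    have h1 : A * e 0 ≤ A := by nlinarith [he 0, he0, hA0]
    have h2 : A ^ cTh γ ≤ A := by
      have := Real.rpow_le_rpow_of_exponent_le hA hθ1
      rwa [Real.rpow_one] at this
    have h3 : e 0 ^ γ ≤ 1 := Real.rpow_le_one (he 0) he0 hγ.le
    have h4 : (0:ℝ) < A ^ cTh γ := Real.rpow_pos_of_pos hA0 _
    have h5 : (0:ℝ) ≤ e 0 ^ γ := Real.rpow_nonneg (he 0) _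
    have h6 : cLam γ A a * A ^ cTh γ * e 0 ^ γ ≤ cLam γ A a * A := by
      calc cLam γ A a * A ^ cTh γ * e 0 ^ γ ≤ cLam γ A a * A ^ cTh γ * 1 :=
            mul_le_mul_of_nonneg_left h3 (by positivity)
        _ = cLam γ A a * A ^ cTh γ := by ring
        _ ≤ cLam γ A a * A := mul_le_mul_of_nonneg_left h2 hlam.le
    unfold cX
    linarith [hPhi1]
  -- K bound : Phi n ≤ cK * e n ^ γ for n ≥ 1
  have hKb : ∀ n, 1 ≤ n → Phi γ A a w e n ≤ cK γ A a * e n ^ γ := by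
    intro n hn
    obtain ⟨m, rfl⟩ : ∃ m, n = m + 1 := ⟨n - 1, (Nat.succ_pred_eq_of_pos hn).symm⟩
    by_cases hz : e (m + 1) = 0
    · have hwz : w (m + 1) = 0 := F6 m hz
      unfold Phi
      rw [hz, hwz, Real.zero_rpow hθ0.ne', Real.zero_rpow hγ.ne']
      simp
    · have hepos : 0 < e (m + 1) := lt_of_le_of_ne (he (m + 1)) (Ne.symm hz)
      have hEγ : (0:ℝ) < e (m + 1) ^ γ := Real.rpow_pos_of_pos hepos _
      have h1 : e (m + 1) ≤ cB A a * e (m + 1) ^ γ := by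
        have ha1 : e (m + 1) = e (m + 1) ^ (1 - γ) * e (m + 1) ^ γ := by
          rw [← Real.rpow_add hepos]
          norm_num
        have ha2 : e (m + 1) ^ (1 - γ) ≤ cB A a ^ (1 - γ) :=
          Real.rpow_le_rpow (he _) (F3 (m + 1)) (by linarith)
        have ha3 : cB A a ^ (1 - γ) ≤ cB A a := by
          have := Real.rpow_le_rpow_of_exponent_le hB1 (by linarith : 1 - γ ≤ 1)
          rwa [Real.rpow_one] at this
        calc e (m + 1) = e (m + 1) ^ (1 - γ) * e (m + 1) ^ γ := ha1
          _ ≤ cB A a * e (m + 1) ^ γ := by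
              apply mul_le_mul_of_nonneg_right _ hEγ.le
              linarith
      have h2 : w (m + 1) ^ cTh γ ≤ (4 * A) ^ cTh γ * e (m + 1) ^ γ := by
        have hb1 : w (m + 1) ^ cTh γ ≤ (4 * A * e (m + 1) ^ (1 + γ)) ^ cTh γ :=
          Real.rpow_le_rpow (hw _) (F5 m) hθ0.le
        have hb2 : (4 * A * e (m + 1) ^ (1 + γ)) ^ cTh γ
            = (4 * A) ^ cTh γ * e (m + 1) ^ γ := by
          rw [Real.mul_rpow (by linarith : (0:ℝ) ≤ 4 * A) (Real.rpow_nonneg (he _) _)]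
          congr 1
          rw [← Real.rpow_mul (he _), cTh_identity2 (A := A) (a := a) hγ hγ1]
        rw [hb2] at hb1
        exact hb1
      have h3 := mul_le_mul_of_nonneg_left h2 hlam.le
      unfold Phi cK
      nlinarith
  -- mu descent
  have hmudesc : ∀ n, 1 ≤ n →
      Phi γ A a w e (n + 1) ≤ Phi γ A a w e n - cMu γ A a * Phi γ A a w e n ^ (1 / γ) := by
    intro n hn
    have hKq : (0:ℝ) < cK γ A a ^ (1 / γ) := Real.rpow_pos_of_pos (by linarith) _
    have h1 : Phi γ A a w e n ^ (1 / γ) ≤ cK γ A a ^ (1 / γ) * e n := by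
      have ha1 : Phi γ A a w e n ^ (1 / γ) ≤ (cK γ A a * e n ^ γ) ^ (1 / γ) :=
        Real.rpow_le_rpow (hPhi0 n) (hKb n hn) (by positivity)
      have ha2 : (cK γ A a * e n ^ γ) ^ (1 / γ) = cK γ A a ^ (1 / γ) * e n := by
        rw [Real.mul_rpow (by linarith : (0:ℝ) ≤ cK γ A a) (Real.rpow_nonneg (he n) _)]
        congr 1
        rw [← Real.rpow_mul (he n)]
        rw [mul_one_div, div_self hγ.ne', Real.rpow_one]
      rw [ha2] at ha1
      exact ha1
    have h2 : cMu γ A a * Phi γ A a w e n ^ (1 / γ) ≤ e n / 2 := by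
      have hmu0 : 0 < cMu γ A a := cMu_pos hγ hγ1 hA ha
      calc cMu γ A a * Phi γ A a w e n ^ (1 / γ)
          ≤ cMu γ A a * (cK γ A a ^ (1 / γ) * e n) := mul_le_mul_of_nonneg_left h1 hmu0.le
        _ = e n / 2 := by
            unfold cMu
            field_simp
    linarith [hdesc n hn]
  exact ⟨hPhi0, hblock, hPhi1, hPhi1X, hmudesc⟩


/-- Lemma 5.1: decay of sequences satisfying the energy/error
dichotomy. -/
theorem sequences_lemma (γ A a : ℝ) (hγ : 0 < γ) (hγ1 : γ ≤ 1) (hA : 1 ≤ A)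
    (ha : 0 < a) :
    ∃ (c C : ℝ) (σ : ℝ → ℝ), 0 < c ∧ c < 1 ∧ 0 < C ∧
      Tendsto σ (𝓝[>] 0) (𝓝 0) ∧
      ∀ w e : ℕ → ℝ, (∀ n, 0 ≤ w n) → (∀ n, 0 ≤ e n) → e 0 ≤ 1 →
        (∀ n, w (n + 1) ≤ A * e n ^ (1 + γ)) →
        (∀ n, (w (n + 1) ≤ w n - a * e n ^ 2 ∧ e (n + 1) = A * e n) ∨
              (w (n + 1) ≤ w n ∧ e (n + 1) = e n / 2)) →
        Summable e ∧ (∑' n, e n) ≤ σ (e 0) ∧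
        (γ = 1 → ∀ N : ℕ, (∑' n, e (N + n)) ≤ C * (1 - c) ^ N) ∧
        (γ < 1 → ∀ N : ℕ, 1 ≤ N →
          (∑' n, e (N + n)) ≤ C * (N : ℝ) ^ (-γ / (1 - γ))) := by
  have hμ0 : 0 < cMu γ A a := cMu_pos hγ hγ1 hA ha
  have hμ2 : cMu γ A a ≤ 1 / 2 := cMu_le_half hγ hγ1 hA ha
  have hX1 : 1 ≤ cX γ A a := cX_one_le hγ hγ1 hA ha
  have hlam : 0 < cLam γ A a := cLam_pos hγ hγ1 hA ha
  have hA0 : (0:ℝ) < A := by linarith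
  -- the modulus function
  set σf : ℝ → ℝ := fun t => (1 + 2 * A) * t + (2 * cLam γ A a * A ^ cTh γ) * t ^ γ with hσf
  have hσtend : Tendsto σf (𝓝[>] 0) (𝓝 0) := by
    have h1 : Tendsto (fun t : ℝ => (1 + 2 * A) * t) (𝓝 0) (𝓝 ((1 + 2 * A) * 0)) :=
      (continuous_const.mul continuous_id).tendsto 0
    have h2 : Tendsto (fun t : ℝ => t ^ γ) (𝓝 0) (𝓝 ((0:ℝ) ^ γ)) :=
      (Real.continuousAt_rpow_const 0 γ (Or.inr hγ.le))
    have h3 : Tendsto (fun t : ℝ => (2 * cLam γ A a * A ^ cTh γ) * t ^ γ) (𝓝 0)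
        (𝓝 ((2 * cLam γ A a * A ^ cTh γ) * (0:ℝ) ^ γ)) := h2.const_mul _
    have h4 := h1.add h3
    rw [Real.zero_rpow hγ.ne'] at h4
    simp only [mul_zero, add_zero] at h4
    exact h4.mono_left nhdsWithin_le_nhds
  -- common consequences for any admissible pair of sequences
  have hcommon : ∀ w e : ℕ → ℝ, (∀ n, 0 ≤ w n) → (∀ n, 0 ≤ e n) → e 0 ≤ 1 →
      (∀ n, w (n + 1) ≤ A * e n ^ (1 + γ)) →
      (∀ n, (w (n + 1) ≤ w n - a * e n ^ 2 ∧ e (n + 1) = A * e n) ∨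
          (w (n + 1) ≤ w n ∧ e (n + 1) = e n / 2)) →
      Summable e ∧ (∑' n, e n) ≤ σf (e 0) ∧ (∑' n, e n) ≤ 1 + 2 * cX γ A a ∧
      (∀ N, 1 ≤ N → (∑' n, e (N + n)) ≤ 2 * Phi γ A a w e N) ∧
      (∀ n, 0 ≤ Phi γ A a w e n) ∧ Phi γ A a w e 1 ≤ cX γ A a ∧
      (∀ n, 1 ≤ n →
        Phi γ A a w e (n + 1) ≤ Phi γ A a w e n - cMu γ A a * Phi γ A a w e n ^ (1 / γ)) := by
    intro w e hw he he0 hwe hdich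
    obtain ⟨hPhi0, hblock, hPhi1, hPhi1X, hmudesc⟩ :=
      seq_facts γ A a hγ hγ1 hA ha w e hw he he0 hwe hdich
    have hbound : ∀ n, (∑ i ∈ Finset.range n, e i) ≤ e 0 + 2 * Phi γ A a w e 1 := by
      intro n
      cases n with
      | zero =>
        simp only [Finset.range_zero, Finset.sum_empty]
        have := hPhi0 1
        linarith [he 0]
      | succ m =>
        rw [Finset.sum_range_succ']
        have hb := hblock 1 le_rfl m
        have heqs : (∑ i ∈ Finset.range m, e (i + 1)) = ∑ i ∈ Finset.range m, e (1 + i) := by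
          apply Finset.sum_congr rfl
          intro i _
          rw [add_comm]
        rw [heqs]
        linarith
    have hsum : Summable e := summable_of_sum_range_le he hbound
    have htsum : (∑' n, e n) ≤ e 0 + 2 * Phi γ A a w e 1 :=
      Real.tsum_le_of_sum_range_le he hbound
    refine ⟨hsum, ?_, ?_, ?_, hPhi0, hPhi1X, hmudesc⟩
    · rw [hσf]
      have : e 0 + 2 * Phi γ A a w e 1
          ≤ e 0 + 2 * (A * e 0 + cLam γ A a * A ^ cTh γ * e 0 ^ γ) := by linarith
      calc (∑' n, e n) ≤ e 0 + 2 * Phi γ A a w e 1 := htsum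
        _ ≤ e 0 + 2 * (A * e 0 + cLam γ A a * A ^ cTh γ * e 0 ^ γ) := this
        _ = (1 + 2 * A) * e 0 + (2 * cLam γ A a * A ^ cTh γ) * e 0 ^ γ := by ring
    · calc (∑' n, e n) ≤ e 0 + 2 * Phi γ A a w e 1 := htsum
        _ ≤ 1 + 2 * cX γ A a := by linarith
    · intro N hN
      exact Real.tsum_le_of_sum_range_le (fun n => he _) (hblock N hN)
  -- split according to γ = 1 or γ < 1
  rcases lt_or_eq_of_le hγ1 with hlt | heq
  · -- case γ < 1
    have hq : 1 < 1 / γ := (one_lt_div hγ).mpr hlt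
    have hq1 : 0 < 1 / γ - 1 := by linarith
    set R : ℝ := (1 + 1 / (1 / γ - 1)) * 2 ^ (1 / (1 / γ - 1)) / cMu γ A a with hR
    have hRpos : 0 < R := by
      rw [hR]
      have : (0:ℝ) < 2 ^ (1 / (1 / γ - 1)) := Real.rpow_pos_of_pos two_pos _
      positivity
    set D : ℝ := cX γ A a + R ^ (1 / (1 / γ - 1)) with hD
    have hRD : R ^ (1 / (1 / γ - 1)) ≤ D := by
      rw [hD]; linarith
    have hDpos : 0 < D := by
      rw [hD]
      have : (0:ℝ) ≤ R ^ (1 / (1 / γ - 1)) := Real.rpow_nonneg hRpos.le _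
      linarith
    have hXD : cX γ A a ≤ D := by
      rw [hD]
      have : (0:ℝ) ≤ R ^ (1 / (1 / γ - 1)) := Real.rpow_nonneg hRpos.le _
      linarith
    have hDp : (1 + 1 / (1 / γ - 1)) * 2 ^ (1 / (1 / γ - 1)) / cMu γ A a ≤ D ^ (1 / γ - 1) := by
      have h2 : R = (R ^ (1 / (1 / γ - 1))) ^ (1 / γ - 1) := by
        rw [← Real.rpow_mul hRpos.le, one_div_mul_cancel hq1.ne', Real.rpow_one]
      calc (1 + 1 / (1 / γ - 1)) * 2 ^ (1 / (1 / γ - 1)) / cMu γ A a = R := hR.symm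
        _ = (R ^ (1 / (1 / γ - 1))) ^ (1 / γ - 1) := h2
        _ ≤ D ^ (1 / γ - 1) :=
            Real.rpow_le_rpow (Real.rpow_nonneg hRpos.le _) hRD hq1.le
    have hexp : 1 / (1 / γ - 1) = γ / (1 - γ) := by
      have hs : 1 / γ - 1 = (1 - γ) / γ := by
        field_simp
      rw [hs, one_div_div]
    refine ⟨1/2, 2 * D, σf, by norm_num, by norm_num, by linarith, hσtend, ?_⟩
    intro w e hw he he0 hwe hdich
    obtain ⟨hsum, htsum, _, htail, hPhi0, hPhi1X, hmudesc⟩ :=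
      hcommon w e hw he he0 hwe hdich
    have hode := ode_decay hq hμ0 hDpos hDp hPhi0 (hPhi1X.trans hXD) hmudesc
    refine ⟨hsum, htsum, ?_, ?_⟩
    · intro h1
      exact absurd h1 hlt.ne
    · intro _ N hN
      have h1 := htail N hN
      have h2 := hode N hN
      have h3 : -(1 / (1 / γ - 1)) = -γ / (1 - γ) := by
        rw [hexp, neg_div]
      rw [h3] at h2
      calc (∑' n, e (N + n)) ≤ 2 * Phi γ A a w e N := h1
        _ ≤ 2 * (D * (N:ℝ) ^ (-γ / (1 - γ))) := by linarith
        _ = 2 * D * (N:ℝ) ^ (-γ / (1 - γ)) := by ring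
  · -- case γ = 1
    subst heq
    refine ⟨cMu 1 A a, (1 + 2 * cX 1 A a) / (1 - cMu 1 A a), σf, hμ0, by linarith, ?_, hσtend, ?_⟩
    · apply div_pos <;> linarith
    intro w e hw he he0 hwe hdich
    obtain ⟨hsum, htsum, htsum1, htail, hPhi0, hPhi1X, hmudesc⟩ :=
      hcommon w e hw he he0 hwe hdich
    refine ⟨hsum, htsum, ?_, ?_⟩
    swap
    · intro h1
      exact absurd h1 (lt_irrefl _)
    intro _ N
    have hgeo : ∀ k, Phi 1 A a w e (1 + k) ≤ cX 1 A a * (1 - cMu 1 A a) ^ k := by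
      intro k
      induction k with
      | zero => simpa using hPhi1X
      | succ k IH =>
        have hd := hmudesc (1 + k) (by omega)
        rw [show (1:ℝ)/1 = 1 by norm_num, Real.rpow_one] at hd
        have hstep : Phi 1 A a w e (1 + (k + 1)) ≤ (1 - cMu 1 A a) * Phi 1 A a w e (1 + k) := by
          have : 1 + (k + 1) = (1 + k) + 1 := by omega
          rw [this]
          linarith
        calc Phi 1 A a w e (1 + (k + 1)) ≤ (1 - cMu 1 A a) * Phi 1 A a w e (1 + k) := hstep
          _ ≤ (1 - cMu 1 A a) * (cX 1 A a * (1 - cMu 1 A a) ^ k) :=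
              mul_le_mul_of_nonneg_left IH (by linarith)
          _ = cX 1 A a * (1 - cMu 1 A a) ^ (k + 1) := by ring
    have hbpos : (0:ℝ) < 1 - cMu 1 A a := by linarith
    cases N with
    | zero =>
      have heq0 : (∑' n, e (0 + n)) = ∑' n, e n := by
        apply tsum_congr
        intro n
        rw [Nat.zero_add]
      rw [heq0]
      have hC1 : 1 + 2 * cX 1 A a ≤ (1 + 2 * cX 1 A a) / (1 - cMu 1 A a) := by
        rw [le_div_iff₀ hbpos]
        nlinarith
      calc (∑' n, e n) ≤ 1 + 2 * cX 1 A a := htsum1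
        _ ≤ (1 + 2 * cX 1 A a) / (1 - cMu 1 A a) := hC1
        _ = (1 + 2 * cX 1 A a) / (1 - cMu 1 A a) * (1 - cMu 1 A a) ^ 0 := by
            rw [pow_zero, mul_one]
    | succ m =>
      have h1 := htail (m + 1) (by omega)
      have h2 : Phi 1 A a w e (m + 1) ≤ cX 1 A a * (1 - cMu 1 A a) ^ m := by
        have := hgeo m
        rwa [show 1 + m = m + 1 by omega] at this
      have h3 : (1 + 2 * cX 1 A a) / (1 - cMu 1 A a) * (1 - cMu 1 A a) ^ (m + 1)
          = (1 + 2 * cX 1 A a) * (1 - cMu 1 A a) ^ m := by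
        rw [pow_succ]
        field_simp
      rw [h3]
      have h4 : (0:ℝ) ≤ (1 - cMu 1 A a) ^ m := pow_nonneg hbpos.le m
      calc (∑' n, e (m + 1 + n)) ≤ 2 * Phi 1 A a w e (m + 1) := h1
        _ ≤ 2 * (cX 1 A a * (1 - cMu 1 A a) ^ m) := by linarith
        _ ≤ (1 + 2 * cX 1 A a) * (1 - cMu 1 A a) ^ m := by nlinarith

end TOP
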